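/- Let Ã ∈ ℝ^{ñ×ñ}, B̃ ∈ ℝ^{ñ×m_w}, C̃ ∈ ℝ^{p_z×ñ}, D̃ ∈ ℝ^{p_z×m_w}. Let P ∈ ℝ^{ñ×ñ} be symmetric with P ≻ 0, and let Π := [[Q, S],[Sᵀ, R]] ∈ ℝ^{(m_w+p_z)×(m_w+p_z)} be symmetric and invertible with R ⪰ 0. Write P̃ := P⁻¹ and Π⁻¹ =: [[Q̃, S̃],[S̃ᵀ, R̃]] with Q̃ ∈ ℝ^{m_w×m_w}. Then col(I_ñ 0; Ã B̃; 0 I_{m_w}; C̃ D̃)ᵀ · blockdiag(−P, P, Π) · col(I_ñ 0; Ã B̃; 0 I_{m_w}; C̃ D̃) ≺ 0 if and only if Q̃ ⪯ 0 and col(Ãᵀ C̃ᵀ; −I_ñ 0; B̃ᵀ D̃ᵀ; 0 −I_{p_z})ᵀ · blockdiag(−P̃, P̃, [[Q̃, S̃],[S̃ᵀ, R̃]]) · col(Ãᵀ C̃ᵀ; −I_ñ 0; B̃ᵀ D̃ᵀ; 0 −I_{p_z}) ≻ 0. -/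

import Mathlib

open Matrix

/-- The stacked matrix `col(I 0; A B; 0 I; C D)`. -/
noncomputable def stackIO {n m p : ℕ}
    (A : Matrix (Fin n) (Fin n) ℝ) (B : Matrix (Fin n) (Fin m) ℝ)
    (C : Matrix (Fin p) (Fin n) ℝ) (D : Matrix (Fin p) (Fin m) ℝ) :
    Matrix ((Fin n ⊕ Fin n) ⊕ (Fin m ⊕ Fin p)) (Fin n ⊕ Fin m) ℝ :=
  fromRows
    (fromRows (fromCols (1 : Matrix (Fin n) (Fin n) ℝ) (0 : Matrix (Fin n) (Fin m) ℝ))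
      (fromCols A B))
    (fromRows (fromCols (0 : Matrix (Fin m) (Fin n) ℝ) (1 : Matrix (Fin m) (Fin m) ℝ))
      (fromCols C D))

/-- The dual stacked matrix `col(Aᵀ Cᵀ; −I 0; Bᵀ Dᵀ; 0 −I)`. -/
noncomputable def stackDual {n m p : ℕ}
    (A : Matrix (Fin n) (Fin n) ℝ) (B : Matrix (Fin n) (Fin m) ℝ)
    (C : Matrix (Fin p) (Fin n) ℝ) (D : Matrix (Fin p) (Fin m) ℝ) :
    Matrix ((Fin n ⊕ Fin n) ⊕ (Fin m ⊕ Fin p)) (Fin n ⊕ Fin p) ℝ :=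
  fromRows
    (fromRows (fromCols Aᵀ Cᵀ)
      (fromCols (-(1 : Matrix (Fin n) (Fin n) ℝ)) (0 : Matrix (Fin n) (Fin p) ℝ)))
    (fromRows (fromCols Bᵀ Dᵀ)
      (fromCols (0 : Matrix (Fin p) (Fin n) ℝ) (-(1 : Matrix (Fin p) (Fin p) ℝ))))

/-- The block-diagonal matrix `blockdiag(−P, P, [[Q, S],[Sᵀ, R]])`. -/
noncomputable def dissipWeight {n m p : ℕ}
    (P : Matrix (Fin n) (Fin n) ℝ) (Q : Matrix (Fin m) (Fin m) ℝ)
    (S : Matrix (Fin m) (Fin p) ℝ) (R : Matrix (Fin p) (Fin p) ℝ) :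
    Matrix ((Fin n ⊕ Fin n) ⊕ (Fin m ⊕ Fin p)) ((Fin n ⊕ Fin n) ⊕ (Fin m ⊕ Fin p)) ℝ :=
  fromBlocks (fromBlocks (-P) 0 0 P) 0 0 (fromBlocks Q S Sᵀ R)


open FiniteDimensional


set_option linter.unusedSectionVars false

section abstractLemmas
variable {ι : Type*} [Fintype ι] [DecidableEq ι]

/-- The bilinear form attached to a matrix. -/
noncomputable def matBilin (W : Matrix ι ι ℝ) : LinearMap.BilinForm ℝ (ι → ℝ) :=
  LinearMap.mk₂ ℝ (fun x y => x ⬝ᵥ W *ᵥ y)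
    (fun a b c => by simp [add_dotProduct])
    (fun t a c => by simp [smul_dotProduct])
    (fun a b c => by simp [mulVec_add, dotProduct_add])
    (fun t a c => by simp [mulVec_smul, dotProduct_smul])

@[simp] lemma matBilin_apply (W : Matrix ι ι ℝ) (x y : ι → ℝ) :
    matBilin W x y = x ⬝ᵥ W *ᵥ y := rfl

lemma matBilin_symm {W : Matrix ι ι ℝ} (hWs : Wᵀ = W) (x y : ι → ℝ) :
    matBilin W x y = matBilin W y x := by
  simp only [matBilin_apply]
  calc x ⬝ᵥ W *ᵥ y = x ᵥ* W ⬝ᵥ y := dotProduct_mulVec _ _ _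
  _ = (Wᵀ *ᵥ x) ⬝ᵥ y := by rw [mulVec_transpose]
  _ = y ⬝ᵥ (Wᵀ *ᵥ x) := dotProduct_comm _ _
  _ = y ⬝ᵥ W *ᵥ x := by rw [hWs]

lemma matBilin_refl {W : Matrix ι ι ℝ} (hWs : Wᵀ = W) : (matBilin W).IsRefl := by
  intro x y h
  rw [matBilin_symm hWs]; exact h

lemma matBilin_nondegenerate {W : Matrix ι ι ℝ} (hWs : Wᵀ = W)
    (hWinj : Function.Injective W.mulVec) : (matBilin W).Nondegenerate := by
  refine (fun hL => ⟨hL, fun y hy => hL y fun n => by rw [matBilin_symm hWs]; exact hy n⟩) ?_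
  intro x hx
  have h0 : W *ᵥ x = 0 := by
    funext i
    have h1 : matBilin W (Pi.single i 1) x = 0 := by
      rw [← matBilin_symm hWs]; exact hx _
    rw [matBilin_apply, single_dotProduct, one_mul] at h1
    simpa using h1
  have := hWinj (a₁ := x) (a₂ := 0) (by simpa using h0)
  exact this

/-- Quadratic expansion. -/
lemma quad_expand {W : Matrix ι ι ℝ} (hWs : Wᵀ = W) (u v : ι → ℝ) (t : ℝ) :
    (u + t • v) ⬝ᵥ W *ᵥ (u + t • v)
      = u ⬝ᵥ W *ᵥ u + 2 * t * (u ⬝ᵥ W *ᵥ v) + t * t * (v ⬝ᵥ W *ᵥ v) := by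
  have h : v ⬝ᵥ W *ᵥ u = u ⬝ᵥ W *ᵥ v := matBilin_symm hWs v u
  simp only [mulVec_add, mulVec_smul, add_dotProduct, dotProduct_add,
    smul_dotProduct, dotProduct_smul, smul_eq_mul]
  rw [h]; ring

/-- Radical lemma: on an NSD subspace, a null vector pairs to zero with everything. -/
lemma nsd_radical {W : Matrix ι ι ℝ} (hWs : Wᵀ = W)
    (Sm : Submodule ℝ (ι → ℝ))
    (hS : ∀ x ∈ Sm, x ⬝ᵥ W *ᵥ x ≤ 0)
    {x : ι → ℝ} (hx : x ∈ Sm) (hx0 : x ⬝ᵥ W *ᵥ x = 0)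
    {s : ι → ℝ} (hs : s ∈ Sm) : s ⬝ᵥ W *ᵥ x = 0 := by
  by_contra hb
  set a := s ⬝ᵥ W *ᵥ s with ha
  set b := s ⬝ᵥ W *ᵥ x with hbdef
  have key : ∀ t : ℝ, a + 2 * t * b ≤ 0 := by
    intro t
    have h1 := hS _ (Sm.add_mem hs (Sm.smul_mem t hx))
    rw [quad_expand hWs s x t, hx0] at h1
    simpa using h1
  have h2 := key ((1 - a) / (2 * b))
  have hb' : (2 : ℝ) * b ≠ 0 := by
    intro h
    rcases mul_eq_zero.mp h with h' | h'
    · norm_num at h'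
    · exact hb h'
  have h3 : 2 * ((1 - a) / (2 * b)) * b = 1 - a := by
    field_simp
  rw [h3] at h2
  linarith

/-- **Lemma A**: if a symmetric invertible `W` is NSD on `Sm` and PSD on `Pm`, then
`dim Sm + dim Pm ≤ card ι`. -/
lemma nsd_psd_dim_bound {W : Matrix ι ι ℝ} (hWs : Wᵀ = W)
    (hWinj : Function.Injective W.mulVec)
    (Sm Pm : Submodule ℝ (ι → ℝ))
    (hS : ∀ x ∈ Sm, x ⬝ᵥ W *ᵥ x ≤ 0)
    (hP : ∀ x ∈ Pm, 0 ≤ x ⬝ᵥ W *ᵥ x) :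
    Module.finrank ℝ Sm + Module.finrank ℝ Pm ≤ Fintype.card ι := by
  classical
  have hWs' : (-W)ᵀ = -W := by rw [transpose_neg, hWs]
  have hkey : Sm ⊓ Pm ≤ (matBilin W).orthogonal (Sm ⊔ Pm) := by
    rintro x ⟨hxS, hxP⟩
    intro n hn
    have hx0 : x ⬝ᵥ W *ᵥ x = 0 :=
      le_antisymm (hS x hxS) (hP x hxP)
    rw [Submodule.mem_sup] at hn
    obtain ⟨s, hs, p, hp, rfl⟩ := hn
    have h1 : s ⬝ᵥ W *ᵥ x = 0 := nsd_radical hWs Sm hS hxS hx0 hs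
    have h2 : p ⬝ᵥ W *ᵥ x = 0 := by
      have := nsd_radical (W := -W) hWs' Pm
        (fun y hy => by simpa [neg_mulVec, dotProduct_neg] using neg_nonpos.mpr (hP y hy))
        hxP (by simpa [neg_mulVec, dotProduct_neg] using hx0) hp
      simpa [neg_mulVec, dotProduct_neg, neg_eq_zero] using this
    show matBilin W (s + p) x = 0
    rw [map_add, LinearMap.add_apply, matBilin_apply, matBilin_apply, h1, h2, add_zero]
  have hdim1 : Module.finrank ℝ ↥(Sm ⊓ Pm)
      ≤ Module.finrank ℝ ↥((matBilin W).orthogonal (Sm ⊔ Pm)) :=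
    Submodule.finrank_mono hkey
  have hdim2 : Module.finrank ℝ ↥((matBilin W).orthogonal (Sm ⊔ Pm))
      = Module.finrank ℝ (ι → ℝ) - Module.finrank ℝ ↥(Sm ⊔ Pm) :=
    LinearMap.BilinForm.finrank_orthogonal (matBilin_nondegenerate hWs hWinj)
      _
  have hdim3 : Module.finrank ℝ ↥(Sm ⊔ Pm) + Module.finrank ℝ ↥(Sm ⊓ Pm)
      = Module.finrank ℝ Sm + Module.finrank ℝ Pm :=
    Submodule.finrank_sup_add_finrank_inf_eq _ _
  have hle : Module.finrank ℝ ↥(Sm ⊔ Pm) ≤ Module.finrank ℝ (ι → ℝ) :=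
    Submodule.finrank_le _
  have hcard : Module.finrank ℝ (ι → ℝ) = Fintype.card ι :=
    Module.finrank_fintype_fun_eq_card ℝ
  omega
end abstractLemmas

section abstract2
variable {ι : Type*} [Fintype ι] [DecidableEq ι]

/-- **Lemma A'** (strict version): we can additionally extend `Pm` by a `W`-orthogonal
vector `e ∉ Pm` with `e ⬝ᵥ W e ≥ 0`. -/
lemma nsd_psd_dim_bound_strict {W : Matrix ι ι ℝ} (hWs : Wᵀ = W)
    (hWinj : Function.Injective W.mulVec)
    (Sm Pm : Submodule ℝ (ι → ℝ))
    (hS : ∀ x ∈ Sm, x ⬝ᵥ W *ᵥ x ≤ 0)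
    (hP : ∀ x ∈ Pm, 0 ≤ x ⬝ᵥ W *ᵥ x)
    (e : ι → ℝ) (he0 : 0 ≤ e ⬝ᵥ W *ᵥ e)
    (heorth : ∀ x ∈ Pm, x ⬝ᵥ W *ᵥ e = 0) (heP : e ∉ Pm) :
    Module.finrank ℝ Sm + Module.finrank ℝ Pm + 1 ≤ Fintype.card ι := by
  set Pm' := Pm ⊔ Submodule.span ℝ {e} with hPm'
  have hP' : ∀ x ∈ Pm', 0 ≤ x ⬝ᵥ W *ᵥ x := by
    intro x hx
    rw [hPm', Submodule.mem_sup] at hx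
    obtain ⟨p, hp, z, hz, rfl⟩ := hx
    obtain ⟨t, rfl⟩ := Submodule.mem_span_singleton.mp hz
    rw [quad_expand hWs p e t, heorth p hp]
    nlinarith [hP p hp, mul_self_nonneg t]
  have hb := nsd_psd_dim_bound hWs hWinj Sm Pm' hS hP'
  have heP' : e ∈ Pm' := Submodule.mem_sup_right (Submodule.mem_span_singleton_self e)
  have hlt : Pm < Pm' := lt_of_le_of_ne le_sup_left (fun he => heP (he ▸ heP'))
  have := Submodule.finrank_lt_finrank_of_lt hlt
  omega

/-- **Lemma B**: if `W` is symmetric invertible, negative definite on `Um` and PSD on a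
complementary-dimension `Pm`, then `W` is positive definite on the `W`-orthogonal
complement of `Um`. -/
lemma posdef_on_orth {W : Matrix ι ι ℝ} (hWs : Wᵀ = W)
    (hWinj : Function.Injective W.mulVec)
    (Um Pm : Submodule ℝ (ι → ℝ))
    (hU : ∀ x ∈ Um, x ≠ 0 → x ⬝ᵥ W *ᵥ x < 0)
    (hP : ∀ x ∈ Pm, 0 ≤ x ⬝ᵥ W *ᵥ x)
    (hdim : Fintype.card ι ≤ Module.finrank ℝ Um + Module.finrank ℝ Pm)
    {v : ι → ℝ} (horth : ∀ u ∈ Um, u ⬝ᵥ W *ᵥ v = 0) (hv : v ≠ 0) :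
    0 < v ⬝ᵥ W *ᵥ v := by
  by_contra hcon
  push_neg at hcon
  have hvU : v ∉ Um := fun hvU => absurd (horth v hvU) (ne_of_lt (hU v hvU hv))
  have hUle : ∀ x ∈ Um, x ⬝ᵥ W *ᵥ x ≤ 0 := by
    intro x hx
    by_cases hx0 : x = 0
    · simp [hx0]
    · exact le_of_lt (hU x hx hx0)
  -- apply the strict bound with roles of neg/pos sides swapped via -W
  have hWs' : (-W)ᵀ = -W := by rw [transpose_neg, hWs]
  have hWinj' : Function.Injective (-W).mulVec := by
    intro a b hab
    apply hWinj
    have : -(W *ᵥ a) = -(W *ᵥ b) := by simpa [neg_mulVec] using hab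
    simpa using this
  have hb := nsd_psd_dim_bound_strict hWs' hWinj' Pm Um
    (fun x hx => by simpa [neg_mulVec, dotProduct_neg] using neg_nonpos.mpr (hP x hx))
    (fun x hx => by simpa [neg_mulVec, dotProduct_neg] using neg_nonneg.mpr (hUle x hx))
    v (by simpa [neg_mulVec, dotProduct_neg] using neg_nonneg.mpr hcon)
    (fun x hx => by simpa [neg_mulVec, dotProduct_neg, neg_eq_zero] using horth x hx)
    hvU
  omega
end abstract2

section transfer
variable {ι κ : Type*} [Fintype ι] [Fintype κ] [DecidableEq ι]

lemma mulVec_dotProduct_eq (M : Matrix ι κ ℝ) (c : κ → ℝ) (w : ι → ℝ) :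
    (M *ᵥ c) ⬝ᵥ w = c ⬝ᵥ (Mᵀ *ᵥ w) := by
  rw [dotProduct_mulVec, vecMul_transpose]

lemma quad_transfer (M : Matrix ι κ ℝ) (W : Matrix ι ι ℝ) (c : κ → ℝ) :
    (M *ᵥ c) ⬝ᵥ W *ᵥ (M *ᵥ c) = c ⬝ᵥ (Mᵀ * W * M) *ᵥ c := by
  rw [Matrix.mul_assoc, ← mulVec_mulVec, ← mulVec_dotProduct_eq, mulVec_mulVec]

end transfer

section concrete
variable {nt mw pz : ℕ}

/-- The embedding `(x, z) ↦ (0, x, 0, z)`. -/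
noncomputable def embP (nt mw pz : ℕ) :
    Matrix ((Fin nt ⊕ Fin nt) ⊕ (Fin mw ⊕ Fin pz)) (Fin nt ⊕ Fin pz) ℝ :=
  fromRows
    (fromRows (0 : Matrix (Fin nt) (Fin nt ⊕ Fin pz) ℝ)
      (fromCols (1 : Matrix (Fin nt) (Fin nt) ℝ) (0 : Matrix (Fin nt) (Fin pz) ℝ)))
    (fromRows (0 : Matrix (Fin mw) (Fin nt ⊕ Fin pz) ℝ)
      (fromCols (0 : Matrix (Fin pz) (Fin nt) ℝ) (1 : Matrix (Fin pz) (Fin pz) ℝ)))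

/-- The embedding `(x, u) ↦ (x, 0, u, 0)`. -/
noncomputable def embP2 (nt mw pz : ℕ) :
    Matrix ((Fin nt ⊕ Fin nt) ⊕ (Fin mw ⊕ Fin pz)) (Fin nt ⊕ Fin mw) ℝ :=
  fromRows
    (fromRows (fromCols (1 : Matrix (Fin nt) (Fin nt) ℝ) (0 : Matrix (Fin nt) (Fin mw) ℝ))
      (0 : Matrix (Fin nt) (Fin nt ⊕ Fin mw) ℝ))
    (fromRows (fromCols (0 : Matrix (Fin mw) (Fin nt) ℝ) (1 : Matrix (Fin mw) (Fin mw) ℝ))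
      (0 : Matrix (Fin pz) (Fin nt ⊕ Fin mw) ℝ))

variable (At : Matrix (Fin nt) (Fin nt) ℝ) (Bt : Matrix (Fin nt) (Fin mw) ℝ)
    (Ct : Matrix (Fin pz) (Fin nt) ℝ) (Dt : Matrix (Fin pz) (Fin mw) ℝ)

lemma stackIO_mulVec_elim (c₁ : Fin nt → ℝ) (c₂ : Fin mw → ℝ) :
    stackIO At Bt Ct Dt *ᵥ Sum.elim c₁ c₂
      = Sum.elim (Sum.elim c₁ (At *ᵥ c₁ + Bt *ᵥ c₂))
          (Sum.elim c₂ (Ct *ᵥ c₁ + Dt *ᵥ c₂)) := by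
  simp [stackIO, fromRows_mulVec, fromCols_mulVec_sumElim, fromBlocks_mulVec, one_mulVec]

lemma stackDual_mulVec_elim (y₁ : Fin nt → ℝ) (y₂ : Fin pz → ℝ) :
    stackDual At Bt Ct Dt *ᵥ Sum.elim y₁ y₂
      = Sum.elim (Sum.elim (Atᵀ *ᵥ y₁ + Ctᵀ *ᵥ y₂) (-y₁))
          (Sum.elim (Btᵀ *ᵥ y₁ + Dtᵀ *ᵥ y₂) (-y₂)) := by
  simp [stackDual, fromRows_mulVec, fromCols_mulVec_sumElim, fromBlocks_mulVec, neg_mulVec, one_mulVec]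

lemma embP_mulVec_elim (a : Fin nt → ℝ) (z : Fin pz → ℝ) :
    embP nt mw pz *ᵥ Sum.elim a z = Sum.elim (Sum.elim (0 : Fin nt → ℝ) a) (Sum.elim (0 : Fin mw → ℝ) z) := by
  simp [embP, fromRows_mulVec, fromCols_mulVec_sumElim, fromBlocks_mulVec, one_mulVec]

lemma embP2_mulVec_elim (a : Fin nt → ℝ) (u : Fin mw → ℝ) :
    embP2 nt mw pz *ᵥ Sum.elim a u = Sum.elim (Sum.elim a (0 : Fin nt → ℝ)) (Sum.elim u (0 : Fin pz → ℝ)) := by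
  simp [embP2, fromRows_mulVec, fromCols_mulVec_sumElim, fromBlocks_mulVec, one_mulVec]

lemma stackIO_mul_stackDual :
    (stackIO At Bt Ct Dt)ᵀ * stackDual At Bt Ct Dt = 0 := by
  ext i j
  rcases i with i | i <;> rcases j with j | j <;>
    simp [stackIO, stackDual, mul_apply, Fintype.sum_sum_type, one_apply,
      Finset.sum_ite_eq, Finset.sum_ite_eq', mul_comm]

end concrete

-- ===================== MAIN THEOREM =====================
theorem dissip_LMI_dualization (nt mw pz : ℕ)
    (At : Matrix (Fin nt) (Fin nt) ℝ) (Bt : Matrix (Fin nt) (Fin mw) ℝ)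
    (Ct : Matrix (Fin pz) (Fin nt) ℝ) (Dt : Matrix (Fin pz) (Fin mw) ℝ)
    (P : Matrix (Fin nt) (Fin nt) ℝ) (hP : P.PosDef)
    (Q : Matrix (Fin mw) (Fin mw) ℝ) (hQ : Q.IsSymm)
    (S : Matrix (Fin mw) (Fin pz) ℝ)
    (R : Matrix (Fin pz) (Fin pz) ℝ) (hR : R.PosSemidef)
    (hPi : IsUnit (fromBlocks Q S Sᵀ R).det)
    (Qt : Matrix (Fin mw) (Fin mw) ℝ) (St : Matrix (Fin mw) (Fin pz) ℝ)
    (Rt : Matrix (Fin pz) (Fin pz) ℝ)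
    (hinv : fromBlocks Qt St Stᵀ Rt = (fromBlocks Q S Sᵀ R)⁻¹) :
    (-((stackIO At Bt Ct Dt)ᵀ * dissipWeight P Q S R * stackIO At Bt Ct Dt)).PosDef
      ↔ ((-Qt).PosSemidef ∧
        ((stackDual At Bt Ct Dt)ᵀ * dissipWeight P⁻¹ Qt St Rt *
          stackDual At Bt Ct Dt).PosDef) := by
  classical
  -- abbreviations
  have hPt : Pᵀ = P := by
    rw [← conjTranspose_eq_transpose_of_trivial]; exact hP.1
  have hRt : Rᵀ = R := by
    rw [← conjTranspose_eq_transpose_of_trivial]; exact hR.1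
  have hPdet : IsUnit P.det := hP.det_pos.ne'.isUnit
  have hPP' : P * P⁻¹ = 1 := mul_nonsing_inv _ hPdet
  have hP'P : P⁻¹ * P = 1 := nonsing_inv_mul _ hPdet
  have hPinvt : (P⁻¹)ᵀ = P⁻¹ := by rw [transpose_nonsing_inv, hPt]
  have hPit : (fromBlocks Q S Sᵀ R)ᵀ = fromBlocks Q S Sᵀ R := by
    rw [fromBlocks_transpose, transpose_transpose, hQ, hRt]
  have hPiPii : fromBlocks Q S Sᵀ R * fromBlocks Qt St Stᵀ Rt = 1 := by
    rw [hinv]; exact mul_nonsing_inv _ hPi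
  have hPiiPi : fromBlocks Qt St Stᵀ Rt * fromBlocks Q S Sᵀ R = 1 := by
    rw [hinv]; exact nonsing_inv_mul _ hPi
  have hPiit : (fromBlocks Qt St Stᵀ Rt)ᵀ = fromBlocks Qt St Stᵀ Rt := by
    rw [hinv, transpose_nonsing_inv, hPit]
  have hQtt : Qtᵀ = Qt := by
    have h := hPiit
    rw [fromBlocks_transpose] at h
    have := congrArg Matrix.toBlocks₁₁ h
    simpa [Matrix.toBlocks_fromBlocks₁₁] using this
  have hRtt : Rtᵀ = Rt := by
    have h := hPiit
    rw [fromBlocks_transpose] at h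
    have := congrArg Matrix.toBlocks₂₂ h
    simpa [Matrix.toBlocks_fromBlocks₂₂] using this
  -- symmetry of weights
  have hWs : (dissipWeight P Q S R)ᵀ = dissipWeight P Q S R := by
    simp [dissipWeight, fromBlocks_transpose, transpose_neg, transpose_transpose,
      hPt, hQ.eq, hRt]
  have hW's : (dissipWeight P⁻¹ Qt St Rt)ᵀ = dissipWeight P⁻¹ Qt St Rt := by
    simp [dissipWeight, fromBlocks_transpose, transpose_neg, transpose_transpose,
      hPinvt, hQtt, hRtt]
  -- products of weights
  have hblk1 : fromBlocks (-P) 0 0 P * fromBlocks (-(P⁻¹)) 0 0 (P⁻¹)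
      = (1 : Matrix (Fin nt ⊕ Fin nt) (Fin nt ⊕ Fin nt) ℝ) := by
    rw [fromBlocks_multiply]
    simp [hPP', fromBlocks_one]
  have hblk2 : fromBlocks (-(P⁻¹)) 0 0 (P⁻¹) * fromBlocks (-P) 0 0 P
      = (1 : Matrix (Fin nt ⊕ Fin nt) (Fin nt ⊕ Fin nt) ℝ) := by
    rw [fromBlocks_multiply]
    simp [hP'P, fromBlocks_one]
  have hWW' : dissipWeight P Q S R * dissipWeight P⁻¹ Qt St Rt = 1 := by
    show fromBlocks (fromBlocks (-P) 0 0 P) 0 0 (fromBlocks Q S Sᵀ R) *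
      fromBlocks (fromBlocks (-(P⁻¹)) 0 0 (P⁻¹)) 0 0 (fromBlocks Qt St Stᵀ Rt) = 1
    rw [fromBlocks_multiply]
    simp only [Matrix.mul_zero, Matrix.zero_mul, add_zero, zero_add]
    rw [hblk1, hPiPii, fromBlocks_one]
  have hW'W : dissipWeight P⁻¹ Qt St Rt * dissipWeight P Q S R = 1 := by
    show fromBlocks (fromBlocks (-(P⁻¹)) 0 0 (P⁻¹)) 0 0 (fromBlocks Qt St Stᵀ Rt) *
      fromBlocks (fromBlocks (-P) 0 0 P) 0 0 (fromBlocks Q S Sᵀ R) = 1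
    rw [fromBlocks_multiply]
    simp only [Matrix.mul_zero, Matrix.zero_mul, add_zero, zero_add]
    rw [hblk2, hPiiPi, fromBlocks_one]
  -- injectivity of the weights
  have hWinj : Function.Injective (dissipWeight P Q S R).mulVec := by
    intro a b hab
    have h1 := congrArg (fun v => dissipWeight P⁻¹ Qt St Rt *ᵥ v) hab
    simpa [mulVec_mulVec, hW'W, one_mulVec] using h1
  have hW'inj : Function.Injective (dissipWeight P⁻¹ Qt St Rt).mulVec := by
    intro a b hab
    have h1 := congrArg (fun v => dissipWeight P Q S R *ᵥ v) hab
    simpa [mulVec_mulVec, hWW', one_mulVec] using h1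
  -- kernels of the stacked matrices
  have hUker : ∀ c, stackIO At Bt Ct Dt *ᵥ c = 0 → c = 0 := by
    intro c hc
    rw [← Sum.elim_comp_inl_inr c, stackIO_mulVec_elim] at hc
    funext i
    rcases i with i | i
    · exact congrFun hc (Sum.inl (Sum.inl i))
    · exact congrFun hc (Sum.inr (Sum.inl i))
  have hVker : ∀ y, stackDual At Bt Ct Dt *ᵥ y = 0 → y = 0 := by
    intro y hy
    rw [← Sum.elim_comp_inl_inr y, stackDual_mulVec_elim] at hy
    funext i
    rcases i with i | i
    · have := congrFun hy (Sum.inl (Sum.inr i))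
      simpa using congrArg Neg.neg this
    · have := congrFun hy (Sum.inr (Sum.inr i))
      simpa using congrArg Neg.neg this
  have hEker : ∀ d, embP nt mw pz *ᵥ d = 0 → d = 0 := by
    intro d hd
    rw [← Sum.elim_comp_inl_inr d, embP_mulVec_elim] at hd
    funext i
    rcases i with i | i
    · exact congrFun hd (Sum.inl (Sum.inr i))
    · exact congrFun hd (Sum.inr (Sum.inr i))
  have hE2ker : ∀ d, embP2 nt mw pz *ᵥ d = 0 → d = 0 := by
    intro d hd
    rw [← Sum.elim_comp_inl_inr d, embP2_mulVec_elim] at hd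
    funext i
    rcases i with i | i
    · exact congrFun hd (Sum.inl (Sum.inl i))
    · exact congrFun hd (Sum.inr (Sum.inl i))
  -- injectivity of the associated linear maps
  have mkInj : ∀ (κ : Type) [Fintype κ] [DecidableEq κ]
      (T : Matrix ((Fin nt ⊕ Fin nt) ⊕ (Fin mw ⊕ Fin pz)) κ ℝ),
      (∀ c, T *ᵥ c = 0 → c = 0) → Function.Injective T.mulVecLin := by
    intro κ _ _ T hker a b hab
    have h : T *ᵥ (a - b) = 0 := by
      rw [mulVec_sub]
      rw [show T *ᵥ a = T *ᵥ b from hab]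
      simp
    exact sub_eq_zero.mp (hker _ h)
  have hUinj := mkInj _ (stackIO At Bt Ct Dt) hUker
  have hVinj := mkInj _ (stackDual At Bt Ct Dt) hVker
  have hEinj := mkInj _ (embP nt mw pz) hEker
  have hE2inj := mkInj _ (embP2 nt mw pz) hE2ker
  -- ranks
  have hUrank : Module.finrank ℝ (LinearMap.range (stackIO At Bt Ct Dt).mulVecLin)
      = nt + mw := by
    rw [LinearMap.finrank_range_of_inj hUinj]
    simp [Module.finrank_fintype_fun_eq_card]
  have hVrank : Module.finrank ℝ (LinearMap.range (stackDual At Bt Ct Dt).mulVecLin)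
      = nt + pz := by
    rw [LinearMap.finrank_range_of_inj hVinj]
    simp [Module.finrank_fintype_fun_eq_card]
  have hErank : Module.finrank ℝ (LinearMap.range (embP nt mw pz).mulVecLin)
      = nt + pz := by
    rw [LinearMap.finrank_range_of_inj hEinj]
    simp [Module.finrank_fintype_fun_eq_card]
  have hE2rank : Module.finrank ℝ (LinearMap.range (embP2 nt mw pz).mulVecLin)
      = nt + mw := by
    rw [LinearMap.finrank_range_of_inj hE2inj]
    simp [Module.finrank_fintype_fun_eq_card]
  have hcard : Fintype.card ((Fin nt ⊕ Fin nt) ⊕ (Fin mw ⊕ Fin pz))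
      = nt + nt + (mw + pz) := by simp [Fintype.card_sum]
  -- PSD of W on range embP
  have hPm : ∀ x ∈ LinearMap.range (embP nt mw pz).mulVecLin,
      0 ≤ x ⬝ᵥ dissipWeight P Q S R *ᵥ x := by
    rintro x ⟨d, rfl⟩
    rw [mulVecLin_apply, ← Sum.elim_comp_inl_inr d, embP_mulVec_elim]
    have hcomp : dissipWeight P Q S R *ᵥ
        Sum.elim (Sum.elim (0 : Fin nt → ℝ) (d ∘ Sum.inl))
          (Sum.elim (0 : Fin mw → ℝ) (d ∘ Sum.inr))
        = Sum.elim (Sum.elim (0 : Fin nt → ℝ) (P *ᵥ (d ∘ Sum.inl)))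
          (Sum.elim (S *ᵥ (d ∘ Sum.inr)) (R *ᵥ (d ∘ Sum.inr))) := by
      simp [dissipWeight, fromBlocks_mulVec, neg_mulVec]
    rw [hcomp]
    rw [sumElim_dotProduct_sumElim, sumElim_dotProduct_sumElim,
      sumElim_dotProduct_sumElim]
    have h1 : 0 ≤ (d ∘ Sum.inl) ⬝ᵥ P *ᵥ (d ∘ Sum.inl) := by
      simpa [star_trivial] using hP.posSemidef.dotProduct_mulVec_nonneg (d ∘ Sum.inl)
    have h2 : 0 ≤ (d ∘ Sum.inr) ⬝ᵥ R *ᵥ (d ∘ Sum.inr) := by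
      simpa [star_trivial] using hR.dotProduct_mulVec_nonneg (d ∘ Sum.inr)
    simp only [zero_dotProduct, zero_add]
    exact add_nonneg h1 h2
  -- helper: hermitian sandwich
  have sandherm : ∀ {κ : Type} [Fintype κ]
      (A : Matrix ((Fin nt ⊕ Fin nt) ⊕ (Fin mw ⊕ Fin pz)) κ ℝ)
      (W₀ : Matrix ((Fin nt ⊕ Fin nt) ⊕ (Fin mw ⊕ Fin pz))
        ((Fin nt ⊕ Fin nt) ⊕ (Fin mw ⊕ Fin pz)) ℝ), W₀ᵀ = W₀ →
      (Aᵀ * W₀ * A).IsHermitian := by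
    intro κ _ A W₀ hW₀
    show _ᴴ = _
    rw [conjTranspose_eq_transpose_of_trivial, transpose_mul, transpose_mul,
      transpose_transpose, hW₀, Matrix.mul_assoc]
  constructor
  · -- forward direction
    intro hL
    have hUm : ∀ x ∈ LinearMap.range (stackIO At Bt Ct Dt).mulVecLin, x ≠ 0 →
        x ⬝ᵥ dissipWeight P Q S R *ᵥ x < 0 := by
      rintro x ⟨c, rfl⟩ hx
      rw [mulVecLin_apply] at hx ⊢
      have hc : c ≠ 0 := by rintro rfl; exact hx (by simp)
      have h := hL.dotProduct_mulVec_pos hc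
      rw [star_trivial] at h
      rw [quad_transfer]
      have heq : c ⬝ᵥ (-((stackIO At Bt Ct Dt)ᵀ * dissipWeight P Q S R *
            stackIO At Bt Ct Dt)) *ᵥ c
          = -(c ⬝ᵥ ((stackIO At Bt Ct Dt)ᵀ * dissipWeight P Q S R *
            stackIO At Bt Ct Dt) *ᵥ c) := by
        simp [neg_mulVec]
      rw [heq] at h
      linarith
    have hUmle : ∀ x ∈ LinearMap.range (stackIO At Bt Ct Dt).mulVecLin,
        x ⬝ᵥ dissipWeight P Q S R *ᵥ x ≤ 0 := by
      intro x hx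
      by_cases hx0 : x = 0
      · simp [hx0]
      · exact le_of_lt (hUm x hx hx0)
    constructor
    · -- (-Qt) is PSD
      refine .of_dotProduct_mulVec_nonneg ?_ ?_
      · show (-Qt)ᴴ = -Qt
        rw [conjTranspose_eq_transpose_of_trivial, transpose_neg, hQtt]
      · intro u
        rw [star_trivial]
        by_contra hneg
        push_neg at hneg
        have hupos : 0 < (Qt *ᵥ u) ⬝ᵥ u := by
          have h1 : u ⬝ᵥ (-Qt) *ᵥ u = -(u ⬝ᵥ Qt *ᵥ u) := by
            simp [neg_mulVec]
          rw [h1] at hneg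
          have h2 : 0 < u ⬝ᵥ Qt *ᵥ u := by linarith
          rwa [dotProduct_comm] at h2
        have hmul := hPiPii
        rw [fromBlocks_multiply, ← fromBlocks_one] at hmul
        obtain ⟨h11, -, h21, -⟩ := fromBlocks_inj.mp hmul
        have hPiiu : fromBlocks Qt St Stᵀ Rt *ᵥ Sum.elim u 0
            = Sum.elim (Qt *ᵥ u) (Stᵀ *ᵥ u) := by
          simp [fromBlocks_mulVec]
        set e : ((Fin nt ⊕ Fin nt) ⊕ (Fin mw ⊕ Fin pz)) → ℝ :=
          Sum.elim (Sum.elim (0 : Fin nt → ℝ) (0 : Fin nt → ℝ))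
            (fromBlocks Qt St Stᵀ Rt *ᵥ Sum.elim u 0) with hedef
        have hWe : dissipWeight P Q S R *ᵥ e
            = Sum.elim (Sum.elim (0 : Fin nt → ℝ) (0 : Fin nt → ℝ)) (Sum.elim u 0) := by
          rw [hedef]
          simp [dissipWeight, fromBlocks_mulVec, mulVec_mulVec, ← add_mulVec,
            h11, h21, one_mulVec]
        have he0 : e ⬝ᵥ dissipWeight P Q S R *ᵥ e = (Qt *ᵥ u) ⬝ᵥ u := by
          rw [hWe, hedef, hPiiu]
          rw [sumElim_dotProduct_sumElim, sumElim_dotProduct_sumElim,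
            sumElim_dotProduct_sumElim]
          simp
        have heorth : ∀ x ∈ LinearMap.range (embP nt mw pz).mulVecLin,
            x ⬝ᵥ dissipWeight P Q S R *ᵥ e = 0 := by
          rintro x ⟨d, rfl⟩
          rw [mulVecLin_apply, ← Sum.elim_comp_inl_inr d, embP_mulVec_elim, hWe]
          rw [sumElim_dotProduct_sumElim, sumElim_dotProduct_sumElim,
            sumElim_dotProduct_sumElim]
          simp
        have heP : e ∉ LinearMap.range (embP nt mw pz).mulVecLin := by
          rintro ⟨d, hd⟩
          rw [mulVecLin_apply, ← Sum.elim_comp_inl_inr d, embP_mulVec_elim,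
            hedef, hPiiu] at hd
          have hz : Qt *ᵥ u = 0 := by
            funext j
            have h := congrFun hd (Sum.inr (Sum.inl j))
            exact h.symm
          rw [hz] at hupos
          simp at hupos
        have hbound := nsd_psd_dim_bound_strict hWs hWinj _ _ hUmle hPm e
          (by rw [he0]; exact le_of_lt hupos) heorth heP
        rw [hUrank, hErank, hcard] at hbound
        omega
    · -- dual LMI is positive definite
      refine .of_dotProduct_mulVec_pos (sandherm _ _ hW's) ?_
      intro y hy
      rw [star_trivial]
      have hvW : (dissipWeight P⁻¹ Qt St Rt *ᵥ (stackDual At Bt Ct Dt *ᵥ y)) ⬝ᵥ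
            dissipWeight P Q S R *ᵥ
              (dissipWeight P⁻¹ Qt St Rt *ᵥ (stackDual At Bt Ct Dt *ᵥ y))
          = y ⬝ᵥ ((stackDual At Bt Ct Dt)ᵀ * dissipWeight P⁻¹ Qt St Rt *
              stackDual At Bt Ct Dt) *ᵥ y := by
        rw [quad_transfer]
        have hmat : (dissipWeight P⁻¹ Qt St Rt)ᵀ * dissipWeight P Q S R *
            dissipWeight P⁻¹ Qt St Rt = dissipWeight P⁻¹ Qt St Rt := by
          rw [hW's, Matrix.mul_assoc, hWW', Matrix.mul_one]
        rw [hmat, quad_transfer]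
      have hvne : dissipWeight P⁻¹ Qt St Rt *ᵥ (stackDual At Bt Ct Dt *ᵥ y) ≠ 0 := by
        intro h0
        have h1 : stackDual At Bt Ct Dt *ᵥ y = 0 := by
          apply hW'inj
          simpa using h0
        exact hy (hVker y h1)
      have horth : ∀ x ∈ LinearMap.range (stackIO At Bt Ct Dt).mulVecLin,
          x ⬝ᵥ dissipWeight P Q S R *ᵥ
            (dissipWeight P⁻¹ Qt St Rt *ᵥ (stackDual At Bt Ct Dt *ᵥ y)) = 0 := by
        rintro x ⟨c, rfl⟩
        rw [mulVecLin_apply, mulVec_mulVec, hWW', one_mulVec]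
        rw [mulVec_dotProduct_eq, mulVec_mulVec, stackIO_mul_stackDual]
        simp
      have hfin := posdef_on_orth hWs hWinj _ _ hUm hPm
        (by rw [hUrank, hErank, hcard]; omega) horth hvne
      rw [hvW] at hfin
      exact hfin
  · -- backward direction
    rintro ⟨hQt, hM⟩
    have hW2s : (-(dissipWeight P⁻¹ Qt St Rt))ᵀ = -(dissipWeight P⁻¹ Qt St Rt) := by
      rw [transpose_neg, hW's]
    have hW2inj : Function.Injective (-(dissipWeight P⁻¹ Qt St Rt)).mulVec := by
      intro a b hab
      apply hW'inj
      have h := congrArg Neg.neg hab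
      simpa [neg_mulVec] using h
    have hUm2 : ∀ x ∈ LinearMap.range (stackDual At Bt Ct Dt).mulVecLin, x ≠ 0 →
        x ⬝ᵥ (-(dissipWeight P⁻¹ Qt St Rt)) *ᵥ x < 0 := by
      rintro x ⟨y, rfl⟩ hx
      rw [mulVecLin_apply] at hx ⊢
      have hy : y ≠ 0 := by rintro rfl; exact hx (by simp)
      have h := hM.dotProduct_mulVec_pos hy
      rw [star_trivial] at h
      rw [neg_mulVec, dotProduct_neg, quad_transfer]
      linarith
    have hPm2 : ∀ x ∈ LinearMap.range (embP2 nt mw pz).mulVecLin,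
        0 ≤ x ⬝ᵥ (-(dissipWeight P⁻¹ Qt St Rt)) *ᵥ x := by
      rintro x ⟨d, rfl⟩
      rw [mulVecLin_apply, ← Sum.elim_comp_inl_inr d, embP2_mulVec_elim]
      have hcomp : dissipWeight P⁻¹ Qt St Rt *ᵥ
          Sum.elim (Sum.elim (d ∘ Sum.inl) (0 : Fin nt → ℝ))
            (Sum.elim (d ∘ Sum.inr) (0 : Fin pz → ℝ))
          = Sum.elim (Sum.elim (-(P⁻¹ *ᵥ (d ∘ Sum.inl))) (0 : Fin nt → ℝ))
              (Sum.elim (Qt *ᵥ (d ∘ Sum.inr)) (Stᵀ *ᵥ (d ∘ Sum.inr))) := by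
        simp [dissipWeight, fromBlocks_mulVec, neg_mulVec]
      rw [neg_mulVec, dotProduct_neg, hcomp]
      rw [sumElim_dotProduct_sumElim, sumElim_dotProduct_sumElim,
        sumElim_dotProduct_sumElim]
      have h1 : 0 ≤ (d ∘ Sum.inl) ⬝ᵥ P⁻¹ *ᵥ (d ∘ Sum.inl) := by
        simpa [star_trivial] using hP.inv.posSemidef.dotProduct_mulVec_nonneg (d ∘ Sum.inl)
      have h2 : 0 ≤ -((d ∘ Sum.inr) ⬝ᵥ Qt *ᵥ (d ∘ Sum.inr)) := by
        have h3 := hQt.dotProduct_mulVec_nonneg (d ∘ Sum.inr)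
        rw [star_trivial] at h3
        have h4 : (d ∘ Sum.inr) ⬝ᵥ (-Qt) *ᵥ (d ∘ Sum.inr)
            = -((d ∘ Sum.inr) ⬝ᵥ Qt *ᵥ (d ∘ Sum.inr)) := by simp [neg_mulVec]
        rwa [h4] at h3
      simp only [dotProduct_neg, zero_dotProduct, dotProduct_zero, add_zero, zero_add]
      linarith
    have hVU : (stackDual At Bt Ct Dt)ᵀ * stackIO At Bt Ct Dt = 0 := by
      have h := congrArg Matrix.transpose (stackIO_mul_stackDual At Bt Ct Dt)
      simpa [transpose_mul, transpose_transpose] using h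
    refine .of_dotProduct_mulVec_pos ?_ ?_
    · have h := sandherm (stackIO At Bt Ct Dt) (dissipWeight P Q S R) hWs
      exact h.neg
    · intro c hc
      rw [star_trivial]
      have hzne : stackIO At Bt Ct Dt *ᵥ c ≠ 0 := fun h => hc (hUker c h)
      have hvne : dissipWeight P Q S R *ᵥ (stackIO At Bt Ct Dt *ᵥ c) ≠ 0 := by
        intro h0
        apply hzne
        apply hWinj
        simpa using h0
      have horth : ∀ x ∈ LinearMap.range (stackDual At Bt Ct Dt).mulVecLin,
          x ⬝ᵥ (-(dissipWeight P⁻¹ Qt St Rt)) *ᵥ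
            (dissipWeight P Q S R *ᵥ (stackIO At Bt Ct Dt *ᵥ c)) = 0 := by
        rintro x ⟨y, rfl⟩
        rw [mulVecLin_apply, neg_mulVec, mulVec_mulVec, hW'W, one_mulVec]
        rw [dotProduct_neg, mulVec_dotProduct_eq, mulVec_mulVec, hVU]
        simp
      have hfin := posdef_on_orth hW2s hW2inj _ _ hUm2 hPm2
        (by rw [hVrank, hE2rank, hcard]; omega) horth hvne
      have hcalc : (dissipWeight P Q S R *ᵥ (stackIO At Bt Ct Dt *ᵥ c)) ⬝ᵥ
            (-(dissipWeight P⁻¹ Qt St Rt)) *ᵥ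
              (dissipWeight P Q S R *ᵥ (stackIO At Bt Ct Dt *ᵥ c))
          = c ⬝ᵥ (-((stackIO At Bt Ct Dt)ᵀ * dissipWeight P Q S R *
              stackIO At Bt Ct Dt)) *ᵥ c := by
        rw [mulVec_mulVec, quad_transfer]
        have hmat : (dissipWeight P Q S R * stackIO At Bt Ct Dt)ᵀ *
            (-(dissipWeight P⁻¹ Qt St Rt)) *
            (dissipWeight P Q S R * stackIO At Bt Ct Dt)
            = -((stackIO At Bt Ct Dt)ᵀ * dissipWeight P Q S R *
              stackIO At Bt Ct Dt) := by
          rw [Matrix.mul_neg, Matrix.neg_mul, neg_inj]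
          rw [transpose_mul, hWs]
          calc (stackIO At Bt Ct Dt)ᵀ * dissipWeight P Q S R *
              dissipWeight P⁻¹ Qt St Rt *
              (dissipWeight P Q S R * stackIO At Bt Ct Dt)
              = (stackIO At Bt Ct Dt)ᵀ * (dissipWeight P Q S R *
                (dissipWeight P⁻¹ Qt St Rt *
                  (dissipWeight P Q S R * stackIO At Bt Ct Dt))) := by
                simp [Matrix.mul_assoc]
            _ = (stackIO At Bt Ct Dt)ᵀ * (dissipWeight P Q S R *
                stackIO At Bt Ct Dt) := by
                rw [← Matrix.mul_assoc (dissipWeight P⁻¹ Qt St Rt), hW'W,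
                  Matrix.one_mul]
            _ = (stackIO At Bt Ct Dt)ᵀ * dissipWeight P Q S R *
                stackIO At Bt Ct Dt := by rw [Matrix.mul_assoc]
        rw [hmat]
      rw [hcalc] at hfin
      exact hfin
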